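/- Let G be a DAG on vertex set {1, …, m} with nodes in topological order, Λ ∈ ℝ_E, Ω diagonal with positive diagonal, and Σ = (I - Λᵀ)⁻¹ Ω (I - Λ)⁻¹. Then for each node v with parent set pa(v) = {w : w → v ∈ E}, the principal submatrix Σ_{pa(v), pa(v)} is invertible and Λ_{pa(v), v} = (Σ_{pa(v), pa(v)})⁻¹ Σ_{pa(v), v} and Ω_{vv} = Σ_{vv} - Σ_{v, pa(v)} (Σ_{pa(v), pa(v)})⁻¹ Σ_{pa(v), v}. Consequently, the map (Λ, Ω) ↦ (I - Λᵀ)⁻¹ Ω (I - Λ)⁻¹ is injective on ℝ_E × diag⁺_m. -/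

import Mathlib

open Matrix

section Aux

variable {n : Type*} [Fintype n] [DecidableEq n]

/-- A principal submatrix (along an injective index map) of a positive definite real matrix
is positive definite. -/
lemma posDef_submatrix_of_injective {A : Matrix n n ℝ} (hA : A.PosDef)
    {P : Type*} [Fintype P] [DecidableEq P] {f : P → n} (hf : Function.Injective f) :
    (A.submatrix f f).PosDef := by
  refine Matrix.posDef_iff_dotProduct_mulVec.mpr ⟨?_, ?_⟩
  · have h := hA.isHermitian
    ext i j
    have := congrFun (congrFun h (f i)) (f j)
    simpa [Matrix.conjTranspose_apply] using this
  · intro x hx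
    set y : n → ℝ := fun i => ∑ p, if i = f p then x p else 0 with hy
    have hyf : ∀ p, y (f p) = x p := by
      intro p
      show (∑ q, if f p = f q then x q else 0) = x p
      rw [Finset.sum_eq_single p]
      · simp
      · intro q _ hq
        exact if_neg (fun h => hq (hf h.symm))
      · simp
    have hsum : ∀ g : n → ℝ, ∑ i, y i * g i = ∑ p, x p * g (f p) := by
      intro g
      have : ∀ i, y i * g i = ∑ p, if i = f p then x p * g i else 0 := by
        intro i
        show (∑ p, if i = f p then x p else 0) * g i = _
        rw [Finset.sum_mul]
        congr 1
        ext p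
        split <;> simp
      simp_rw [this]
      rw [Finset.sum_comm]
      congr 1
      ext p
      have : ∀ i, (if i = f p then x p * g i else 0) =
          (if i = f p then x p * g (f p) else 0) := by
        intro i; split <;> simp_all
      simp_rw [this]
      simp
    have hy0 : y ≠ 0 := by
      intro h
      apply hx
      funext p
      have := congrFun h (f p)
      rw [hyf p] at this
      exact this
    have hpos := hA.dotProduct_mulVec_pos hy0
    have hstar : star y = y := by funext i; simp
    have hstar' : star x = x := by funext i; simp
    rw [hstar] at hpos
    have hcalc : dotProduct y (A *ᵥ y) = dotProduct x ((A.submatrix f f) *ᵥ x) := by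
      rw [dotProduct]
      have h1 : ∀ i, (A *ᵥ y) i = ∑ q, x q * A i (f q) := by
        intro i
        rw [mulVec, dotProduct]
        have : ∀ j, A i j * y j = y j * A i j := fun j => mul_comm _ _
        simp_rw [this]
        exact hsum (fun j => A i j)
      simp_rw [h1]
      rw [hsum (fun i => ∑ q, x q * A i (f q)), dotProduct]
      refine Finset.sum_congr rfl fun p _ => ?_
      rw [mulVec, dotProduct]
      simp only [submatrix_apply, Finset.mul_sum]
      refine Finset.sum_congr rfl fun q _ => ?_
      ring
    rw [hstar', ← hcalc]
    exact hpos

/-- `Bᵀ * D * B` is positive definite when `D` is and `B` is invertible. -/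
lemma posDef_conj {D B : Matrix n n ℝ} (hD : D.PosDef) (hB : IsUnit B.det) :
    (Bᵀ * D * B).PosDef := by
  have hBH : Bᴴ = Bᵀ := by ext i j; simp [conjTranspose_apply]
  refine Matrix.posDef_iff_dotProduct_mulVec.mpr ⟨?_, ?_⟩
  · have := isHermitian_conjTranspose_mul_mul B hD.isHermitian
    rwa [hBH] at this
  · intro x hx
    have hBx : B *ᵥ x ≠ 0 := by
      intro h
      apply hx
      have hinj : Function.Injective (B.mulVec) :=
        (Matrix.mulVec_injective_iff_isUnit.mpr ((isUnit_iff_isUnit_det B).mpr hB))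
      have : B *ᵥ x = B *ᵥ 0 := by rw [h, mulVec_zero]
      exact hinj this
    have hpos := hD.dotProduct_mulVec_pos hBx
    have hstar : ∀ z : n → ℝ, star z = z := by intro z; funext i; simp
    rw [hstar] at hpos
    rw [hstar]
    calc dotProduct x ((Bᵀ * D * B) *ᵥ x)
        = dotProduct x (Bᵀ *ᵥ (D *ᵥ (B *ᵥ x))) := by rw [← mulVec_mulVec, ← mulVec_mulVec]
      _ = dotProduct (x ᵥ* Bᵀ) (D *ᵥ (B *ᵥ x)) := by rw [dotProduct_mulVec]
      _ = dotProduct (B *ᵥ x) (D *ᵥ (B *ᵥ x)) := by rw [vecMul_transpose]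
      _ > 0 := hpos

end Aux

section Key

variable {m : ℕ}

lemma dag_key (E : Finset (Fin m × Fin m)) (hE : ∀ e ∈ E, e.1 < e.2)
    (Λ : Matrix (Fin m) (Fin m) ℝ) (hΛ : ∀ w v, (w, v) ∉ E → Λ w v = 0)
    (ω : Fin m → ℝ) (hω : ∀ i, 0 < ω i) (v : Fin m) :
    IsUnit (Matrix.submatrix
        ((1 - Λᵀ)⁻¹ * Matrix.diagonal ω * (1 - Λ)⁻¹)
        (fun w : {w : Fin m // (w, v) ∈ E} => (w : Fin m))
        (fun w : {w : Fin m // (w, v) ∈ E} => (w : Fin m))) ∧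
    (fun w : {w : Fin m // (w, v) ∈ E} => Λ (w : Fin m) v) =
      (Matrix.submatrix
          ((1 - Λᵀ)⁻¹ * Matrix.diagonal ω * (1 - Λ)⁻¹)
          (fun w : {w : Fin m // (w, v) ∈ E} => (w : Fin m))
          (fun w : {w : Fin m // (w, v) ∈ E} => (w : Fin m)))⁻¹ *ᵥ
        (fun w : {w : Fin m // (w, v) ∈ E} =>
          ((1 - Λᵀ)⁻¹ * Matrix.diagonal ω * (1 - Λ)⁻¹) (w : Fin m) v) ∧
    ω v = ((1 - Λᵀ)⁻¹ * Matrix.diagonal ω * (1 - Λ)⁻¹) v v -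
      (fun w : {w : Fin m // (w, v) ∈ E} =>
          ((1 - Λᵀ)⁻¹ * Matrix.diagonal ω * (1 - Λ)⁻¹) v (w : Fin m)) ⬝ᵥ
        ((Matrix.submatrix
            ((1 - Λᵀ)⁻¹ * Matrix.diagonal ω * (1 - Λ)⁻¹)
            (fun w : {w : Fin m // (w, v) ∈ E} => (w : Fin m))
            (fun w : {w : Fin m // (w, v) ∈ E} => (w : Fin m)))⁻¹ *ᵥ
          (fun w : {w : Fin m // (w, v) ∈ E} =>
            ((1 - Λᵀ)⁻¹ * Matrix.diagonal ω * (1 - Λ)⁻¹) (w : Fin m) v)) := by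
  set S : Matrix (Fin m) (Fin m) ℝ := (1 - Λᵀ)⁻¹ * Matrix.diagonal ω * (1 - Λ)⁻¹ with hS
  -- basic triangularity facts
  have hΛbt : Λ.BlockTriangular id := by
    intro i j hij
    refine hΛ _ _ (fun hmem => ?_)
    exact absurd (hE _ hmem) (not_lt.2 (le_of_lt hij))
  have h1bt : (1 - Λ).BlockTriangular id := Matrix.blockTriangular_one.sub hΛbt
  have hΛdiag : ∀ i, Λ i i = 0 := fun i => hΛ i i (fun h => lt_irrefl i (hE _ h))
  have hdet1 : (1 - Λ).det = 1 := by
    rw [Matrix.det_of_upperTriangular h1bt]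
    have : ∀ i : Fin m, (1 - Λ) i i = 1 := by
      intro i
      simp [Matrix.sub_apply, hΛdiag i]
    simp [this]
  have hdet : IsUnit (1 - Λ).det := by rw [hdet1]; exact isUnit_one
  have hT : (1 - Λᵀ) = (1 - Λ)ᵀ := by rw [transpose_sub, transpose_one]
  have hdetT : IsUnit (1 - Λᵀ).det := by rw [hT, det_transpose]; exact hdet
  have hTinv : (1 - Λᵀ)⁻¹ = ((1 - Λ)⁻¹)ᵀ := by
    rw [hT, ← transpose_nonsing_inv]
  haveI : Invertible (1 - Λ) := (1 - Λ).invertibleOfIsUnitDet hdet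
  have hBbt : ((1 - Λ)⁻¹).BlockTriangular id :=
    blockTriangular_inv_of_blockTriangular h1bt
  -- positive definiteness of S
  have hSpd : S.PosDef := by
    rw [hS, hTinv]
    exact posDef_conj (Matrix.posDef_diagonal_iff.mpr hω)
      ((1 - Λ).isUnit_nonsing_inv_det hdet)
  -- S * (1 - Λ) = (1 - Λᵀ)⁻¹ * diagonal ω
  have hSB : S * (1 - Λ) = (1 - Λᵀ)⁻¹ * Matrix.diagonal ω := by
    rw [hS, mul_assoc, nonsing_inv_mul _ hdet, mul_one]
  have hM0 : ∀ w u : Fin m, w < u → (S * (1 - Λ)) w u = 0 := by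
    intro w u hwu
    rw [hSB, hTinv, mul_diagonal, transpose_apply, hBbt hwu, zero_mul]
  have hSv : ∀ w : Fin m, w < v → S w v = ∑ k, S w k * Λ k v := by
    intro w hw
    have h0 := hM0 w v hw
    rw [Matrix.mul_sub, Matrix.mul_one, Matrix.sub_apply, sub_eq_zero] at h0
    rw [h0, Matrix.mul_apply]
  -- restricting sums to parents
  have hsub : ∀ g : Fin m → ℝ, ∑ k, g k * Λ k v =
      ∑ k : {w : Fin m // (w, v) ∈ E}, g (k : Fin m) * Λ (k : Fin m) v := by
    intro g
    rw [← Finset.sum_subtype (Finset.univ.filter (fun k => (k, v) ∈ E))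
      (by intro x; simp) (fun k => g k * Λ k v)]
    rw [Finset.sum_filter_of_ne]
    intro x _ hx
    by_contra hmem
    exact hx (by rw [hΛ x v hmem, mul_zero])
  set c : {w : Fin m // (w, v) ∈ E} → Fin m := fun w => (w : Fin m) with hc
  have hvec : (fun w : {w : Fin m // (w, v) ∈ E} => S (w : Fin m) v) =
      (S.submatrix c c) *ᵥ (fun k : {w : Fin m // (w, v) ∈ E} => Λ (k : Fin m) v) := by
    funext w
    rw [mulVec, dotProduct]
    simp only [submatrix_apply]
    rw [hSv (w : Fin m) (hE _ w.2), hsub (fun k => S (w : Fin m) k)]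
  have hApd : (S.submatrix c c).PosDef :=
    posDef_submatrix_of_injective hSpd Subtype.coe_injective
  have hAunit : IsUnit (S.submatrix c c) := hApd.isUnit
  have hAdet : IsUnit (S.submatrix c c).det := (isUnit_iff_isUnit_det _).mp hAunit
  have hΛeq : (fun w : {w : Fin m // (w, v) ∈ E} => Λ (w : Fin m) v) =
      (S.submatrix c c)⁻¹ *ᵥ (fun w : {w : Fin m // (w, v) ∈ E} => S (w : Fin m) v) := by
    rw [hvec, mulVec_mulVec, nonsing_inv_mul _ hAdet, one_mulVec]
  refine ⟨hAunit, hΛeq, ?_⟩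
  -- the ω recovery formula
  have hΩ : (1 - Λᵀ) * (S * (1 - Λ)) = Matrix.diagonal ω := by
    rw [hSB, ← mul_assoc, mul_nonsing_inv _ hdetT, one_mul]
  have hωv : ω v = S v v - ∑ k, S v k * Λ k v := by
    have h1 : ω v = ((1 - Λᵀ) * (S * (1 - Λ))) v v := by
      rw [hΩ, Matrix.diagonal_apply_eq]
    rw [Matrix.mul_apply] at h1
    have h2 : ∀ k, (1 - Λᵀ) v k * (S * (1 - Λ)) k v =
        (1 : Matrix (Fin m) (Fin m) ℝ) v k * (S * (1 - Λ)) k v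
          - Λᵀ v k * (S * (1 - Λ)) k v := by
      intro k; rw [Matrix.sub_apply, sub_mul]
    rw [Finset.sum_congr rfl (fun k _ => h2 k), Finset.sum_sub_distrib] at h1
    have h3 : ∑ k, (1 : Matrix (Fin m) (Fin m) ℝ) v k * (S * (1 - Λ)) k v =
        (S * (1 - Λ)) v v := by
      simp [Matrix.one_apply, Finset.sum_ite_eq]
    have h4 : ∑ k, Λᵀ v k * (S * (1 - Λ)) k v = 0 := by
      apply Finset.sum_eq_zero
      intro k _
      by_cases hk : (k, v) ∈ E
      · rw [hM0 k v (hE _ hk), mul_zero]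
      · rw [transpose_apply, hΛ k v hk, zero_mul]
    rw [h3, h4, sub_zero] at h1
    rw [h1, Matrix.mul_sub, Matrix.mul_one, Matrix.sub_apply, Matrix.mul_apply]
  rw [← hΛeq]
  rw [hωv]
  congr 1
  rw [dotProduct, hsub (fun k => S v k)]

end Key

/-- Identifiability of fully observed Gaussian DAG models: writing
`Σ = (I - Λᵀ)⁻¹ Ω (I - Λ)⁻¹`, the parameters are recovered by
`Λ_{pa(v),v} = Σ_{pa(v),pa(v)}⁻¹ Σ_{pa(v),v}` and
`Ω_{vv} = Σ_{vv} - Σ_{v,pa(v)} Σ_{pa(v),pa(v)}⁻¹ Σ_{pa(v),v}`; consequently the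
parametrization `(Λ, Ω) ↦ Σ` is injective on `ℝ_E × diag⁺_m`. -/
theorem stmt_14 (m : ℕ) (E : Finset (Fin m × Fin m)) (hE : ∀ e ∈ E, e.1 < e.2) :
    (∀ (Λ : Matrix (Fin m) (Fin m) ℝ), (∀ w v, (w, v) ∉ E → Λ w v = 0) →
      ∀ (ω : Fin m → ℝ), (∀ i, 0 < ω i) →
      ∀ v : Fin m,
        IsUnit (Matrix.submatrix
            ((1 - Λᵀ)⁻¹ * Matrix.diagonal ω * (1 - Λ)⁻¹)
            (fun w : {w : Fin m // (w, v) ∈ E} => (w : Fin m))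
            (fun w : {w : Fin m // (w, v) ∈ E} => (w : Fin m))) ∧
        (fun w : {w : Fin m // (w, v) ∈ E} => Λ (w : Fin m) v) =
          (Matrix.submatrix
              ((1 - Λᵀ)⁻¹ * Matrix.diagonal ω * (1 - Λ)⁻¹)
              (fun w : {w : Fin m // (w, v) ∈ E} => (w : Fin m))
              (fun w : {w : Fin m // (w, v) ∈ E} => (w : Fin m)))⁻¹ *ᵥ
            (fun w : {w : Fin m // (w, v) ∈ E} =>
              ((1 - Λᵀ)⁻¹ * Matrix.diagonal ω * (1 - Λ)⁻¹) (w : Fin m) v) ∧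
        ω v = ((1 - Λᵀ)⁻¹ * Matrix.diagonal ω * (1 - Λ)⁻¹) v v -
          (fun w : {w : Fin m // (w, v) ∈ E} =>
              ((1 - Λᵀ)⁻¹ * Matrix.diagonal ω * (1 - Λ)⁻¹) v (w : Fin m)) ⬝ᵥ
            ((Matrix.submatrix
                ((1 - Λᵀ)⁻¹ * Matrix.diagonal ω * (1 - Λ)⁻¹)
                (fun w : {w : Fin m // (w, v) ∈ E} => (w : Fin m))
                (fun w : {w : Fin m // (w, v) ∈ E} => (w : Fin m)))⁻¹ *ᵥ
              (fun w : {w : Fin m // (w, v) ∈ E} =>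
                ((1 - Λᵀ)⁻¹ * Matrix.diagonal ω * (1 - Λ)⁻¹) (w : Fin m) v))) ∧
    ∀ (Λ₁ Λ₂ : Matrix (Fin m) (Fin m) ℝ) (ω₁ ω₂ : Fin m → ℝ),
      (∀ w v, (w, v) ∉ E → Λ₁ w v = 0) → (∀ w v, (w, v) ∉ E → Λ₂ w v = 0) →
      (∀ i, 0 < ω₁ i) → (∀ i, 0 < ω₂ i) →
      (1 - Λ₁ᵀ)⁻¹ * Matrix.diagonal ω₁ * (1 - Λ₁)⁻¹ =
        (1 - Λ₂ᵀ)⁻¹ * Matrix.diagonal ω₂ * (1 - Λ₂)⁻¹ →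
      Λ₁ = Λ₂ ∧ ω₁ = ω₂ := by
  refine ⟨fun Λ hΛ ω hω v => dag_key E hE Λ hΛ ω hω v, ?_⟩
  intro Λ₁ Λ₂ ω₁ ω₂ hΛ₁ hΛ₂ hω₁ hω₂ hSig
  have key1 := fun v => dag_key E hE Λ₁ hΛ₁ ω₁ hω₁ v
  have key2 := fun v => dag_key E hE Λ₂ hΛ₂ ω₂ hω₂ v
  constructor
  · ext w v
    by_cases hw : (w, v) ∈ E
    · have h1 := (key1 v).2.1
      have h2 := (key2 v).2.1
      rw [hSig] at h1
      rw [← h2] at h1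
      exact congrFun h1 ⟨w, hw⟩
    · rw [hΛ₁ w v hw, hΛ₂ w v hw]
  · funext v
    have h1 := (key1 v).2.2
    have h2 := (key2 v).2.2
    rw [hSig] at h1
    rw [h1, h2]
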